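/- A subset S of {2, ..., n−1} is the set of interior peaks of some permutation of {1, ..., n} if and only if S contains no two consecutive integers (i.e., if i ∈ S then i−1 ∉ S). -/

import Mathlib

/-- The set of interior peaks of a word `l = (π₁, …, π_n)` (1-indexed positions):
positions `i` with `2 ≤ i ≤ n-1` and `π_{i-1} < π_i > π_{i+1}`. -/
def interiorPeaks (l : List ℕ) : Set ℕ :=
  {i | 2 ≤ i ∧ i ≤ l.length - 1 ∧
    l.getD (i - 2) 0 < l.getD (i - 1) 0 ∧ l.getD i 0 < l.getD (i - 1) 0}

open Classical in
/-- Auxiliary function: swap `j` and `j+1` for each `j ∈ S`. -/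
noncomputable def pfAux (S : Set ℕ) (j : ℕ) : ℕ :=
  if j ∈ S then j + 1 else if j - 1 ∈ S then j - 1 else j

lemma pfAux_invol (S : Set ℕ) (h2 : ∀ i ∈ S, 2 ≤ i) (hnc : ∀ i ∈ S, i - 1 ∉ S)
    (j : ℕ) : pfAux S (pfAux S j) = j := by
  unfold pfAux
  by_cases hj : j ∈ S
  · have h1 : j + 1 ∉ S := fun h => hnc (j + 1) h (by simpa using hj)
    have h3 : j + 1 - 1 = j := by omega
    simp [hj, h1, h3]
  · by_cases hj1 : j - 1 ∈ S
    · have hj2 := h2 _ hj1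
      have h3 : j - 1 + 1 = j := by omega
      simp [hj, hj1, h3]
    · simp [hj, hj1]

lemma pfAux_inj (S : Set ℕ) (h2 : ∀ i ∈ S, 2 ≤ i) (hnc : ∀ i ∈ S, i - 1 ∉ S) :
    Function.Injective (pfAux S) :=
  Function.LeftInverse.injective (pfAux_invol S h2 hnc)

lemma pfAux_mem {n : ℕ} (S : Set ℕ) (hS : S ⊆ Set.Icc 2 (n - 1)) {j : ℕ}
    (hj : 1 ≤ j ∧ j < 1 + n) : 1 ≤ pfAux S j ∧ pfAux S j < 1 + n := by
  unfold pfAux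
  split_ifs with h h'
  · have := hS h; simp [Set.mem_Icc] at this; omega
  · have := hS h'; simp [Set.mem_Icc] at this; omega
  · exact hj

theorem stmt4 (n : ℕ) (S : Set ℕ) (hS : S ⊆ Set.Icc 2 (n - 1)) :
    (∃ l : List ℕ, l.Perm (List.range' 1 n) ∧ interiorPeaks l = S) ↔
      ∀ i ∈ S, i - 1 ∉ S := by
  constructor
  · rintro ⟨l, -, rfl⟩ i hi hi1
    obtain ⟨h2i, hin, ha, hb⟩ := hi
    obtain ⟨h2i1, hin1, hc, hd⟩ := hi1
    have e1 : i - 1 - 1 = i - 2 := by omega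
    rw [e1] at hd
    omega
  · intro hnc
    have h2 : ∀ i ∈ S, 2 ≤ i := fun i hi => (hS hi).1
    have hn1 : ∀ i ∈ S, i ≤ n - 1 := fun i hi => (hS hi).2
    refine ⟨(List.range' 1 n).map (pfAux S), ?_, ?_⟩
    · rw [List.perm_ext_iff_of_nodup
        ((List.nodup_range' (s := 1) (n := n)).map (pfAux_inj S h2 hnc)) (List.nodup_range' (s := 1) (n := n))]
      intro a
      simp only [List.mem_map, List.mem_range'_1]
      constructor
      · rintro ⟨j, hj, rfl⟩
        exact pfAux_mem S hS hj
      · intro ha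
        exact ⟨pfAux S a, pfAux_mem S hS ha, pfAux_invol S h2 hnc a⟩
    · have hget : ∀ k, k < n → ((List.range' 1 n).map (pfAux S)).getD k 0 = pfAux S (1 + k) := by
        intro k hk
        rw [List.getD_eq_getElem _ _ (by simpa using hk)]
        simp
      ext i
      simp only [interiorPeaks, Set.mem_setOf_eq, List.length_map, List.length_range']
      constructor
      · rintro ⟨h2i, hin, ha, hb⟩
        have hn3 : 3 ≤ n := by omega
        have e1 : 1 + (i - 2) = i - 1 := by omega
        have e2 : 1 + (i - 1) = i := by omega
        rw [hget (i - 2) (by omega), hget (i - 1) (by omega), e1, e2] at ha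
        rw [hget i (by omega), hget (i - 1) (by omega), e2] at hb
        -- ha : pfAux S (i-1) < pfAux S i, hb : pfAux S (1+i) < pfAux S i
        by_contra hiS
        unfold pfAux at ha hb
        by_cases hi1 : i - 1 ∈ S
        · -- pfAux S i = i - 1, pfAux S (i-1) = i
          have : i - 1 - 1 ∉ S := hnc _ hi1
          have e3 : i - 1 + 1 = i := by omega
          rw [if_neg hiS, if_pos hi1, if_pos hi1, e3] at ha
          omega
        · rw [if_neg hiS, if_neg hi1] at ha hb
          by_cases hi2 : 1 + i ∈ S
          · rw [if_pos hi2] at hb; omega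
          · have e4 : 1 + i - 1 = i := by omega
            rw [if_neg hi2, e4, if_neg hiS] at hb
            omega
      · intro hiS
        have h2i := h2 i hiS
        have hin := hn1 i hiS
        have hn3 : 3 ≤ n := by omega
        refine ⟨h2i, hin, ?_, ?_⟩
        · have e1 : 1 + (i - 2) = i - 1 := by omega
          have e2 : 1 + (i - 1) = i := by omega
          rw [hget (i - 2) (by omega), hget (i - 1) (by omega), e1, e2]
          have hi1 : i - 1 ∉ S := hnc i hiS
          unfold pfAux
          rw [if_pos hiS, if_neg hi1]
          split_ifs with h
          · have := h2 _ h; omega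
          · omega
        · have e2 : 1 + (i - 1) = i := by omega
          rw [hget i (by omega), hget (i - 1) (by omega), e2]
          have hi1 : 1 + i ∉ S := fun h => hnc (1 + i) h (by simpa using hiS)
          have e4 : 1 + i - 1 = i := by omega
          unfold pfAux
          rw [if_pos hiS, if_neg hi1, e4, if_pos hiS]
          omega
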